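/- Let G be a topological group, d ∈ ℕ with d ≥ 1, and η : G → ℝ a continuous function. Define ξ_η : G × G → ℝ by ξ_η(g,h) = η(h) − η(g), let G act on functions F : G × G → ℝ by (g•F)(h,k) = F(g⁻¹h, g⁻¹k), and set ∂_g F := g•F − F. Then (∂_{g₁} ∘ ⋯ ∘ ∂_{g_d})(ξ_η) is identically zero for all g₁, …, g_d ∈ G if and only if η ∈ Pol_d(G), i.e. (∂_{g₁} ∘ ⋯ ∘ ∂_{g_{d+1}})(η) is identically zero for all g₁, …, g_{d+1} ∈ G. (This identifies the degree-d polynomial first cohomology H¹_{(d)}(G,ℝ) with Pol_d(G)/Pol_{d−1}(G).) -/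

import Mathlib

/-- The left difference operator on real-valued functions on `G`:
`(∂_g ξ)(h) = ξ(g⁻¹h) - ξ(h)`. -/
def lDiff {G : Type*} [Group G] (g : G) (ξ : G → ℝ) : G → ℝ :=
  fun h => ξ (g⁻¹ * h) - ξ h

/-- The difference operator for the diagonal action of `G` on functions on `G × G`:
`(∂_g F)(h,k) = F(g⁻¹h, g⁻¹k) - F(h,k)`. -/
def lDiff2 {G : Type*} [Group G] (g : G) (F : G × G → ℝ) : G × G → ℝ :=
  fun p => F (g⁻¹ * p.1, g⁻¹ * p.2) - F p

lemma foldr_lDiff2_eq {G : Type*} [Group G] (η : G → ℝ) (gs : List G) :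
    gs.foldr lDiff2 (fun p : G × G => η p.2 - η p.1) =
      fun p : G × G => gs.foldr lDiff η p.2 - gs.foldr lDiff η p.1 := by
  induction gs with
  | nil => rfl
  | cons g gs ih =>
    funext p
    simp only [List.foldr_cons, lDiff2, ih, lDiff]
    ring

/-- For a continuous `η : G → ℝ`, the homogeneous cochain `ξ_η(g,h) = η(h) - η(g)` has all
`d`-fold iterated differences identically zero iff `η` is a polynomial map of degree at
most `d`, i.e. all `(d+1)`-fold iterated differences of `η` vanish identically. -/
theorem stmt3 {G : Type*} [Group G] [TopologicalSpace G] [IsTopologicalGroup G]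
    (d : ℕ) (hd : 1 ≤ d) (η : G → ℝ) (hη : Continuous η) :
    (∀ gs : List G, gs.length = d →
      gs.foldr lDiff2 (fun p : G × G => η p.2 - η p.1) = 0) ↔
    (∀ gs : List G, gs.length = d + 1 → gs.foldr lDiff η = 0) := by
  constructor
  · intro H gs hl
    match gs, hl with
    | g :: gs', hl =>
      have hl' : gs'.length = d := by simpa using hl
      have h1 := H gs' hl'
      rw [foldr_lDiff2_eq] at h1
      funext h
      have h2 := congrFun h1 (h, g⁻¹ * h)
      simp only [List.foldr_cons, lDiff, Pi.zero_apply] at h2 ⊢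
      linarith
  · intro H gs hl
    rw [foldr_lDiff2_eq]
    funext p
    have h1 := congrFun (H (p.1 * p.2⁻¹ :: gs) (by simpa using hl)) p.1
    simp only [List.foldr_cons, lDiff, Pi.zero_apply, mul_inv_rev, inv_inv] at h1
    have : p.2 * p.1⁻¹ * p.1 = p.2 := by group
    rw [this] at h1
    simpa using h1
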